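/- In the setting of the previous greedy theorem with a single resource type absent (i.e., R lists D_1,…,D_R plus the 'all' list D_0, each sorted decreasingly by reward, and all m_i = m equal): in each round, choosing max(r(D_0[0]), ∑_{i=1}^{R} r(D_i[0])) and removing the corresponding item(s) yields, after m rounds, total reward at least that of any assignment in which each resource serves at most one demand and a demand in D_0 consumes one resource of every type while a demand in D_i consumes one resource of type i. -/

import Mathlib

open Finset

/-- One round per remaining resource: serve either the best demand of `D_0`
(requiring all types) or the best remaining demand of each `D_i`. -/
noncomputable def greedyRounds {R : ℕ} : ℕ → List ℝ → (Fin R → List ℝ) → ℝ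
  | 0, _, _ => 0
  | m + 1, L0, Ls =>
      if (∑ i : Fin R, (Ls i).headI) ≤ L0.headI then
        L0.headI + greedyRounds m L0.tail Ls
      else
        (∑ i : Fin R, (Ls i).headI) + greedyRounds m L0 (fun i => (Ls i).tail)

lemma headI_nonneg {L : List ℝ} (h : ∀ x ∈ L, 0 ≤ x) : 0 ≤ L.headI := by
  cases L with
  | nil => exact le_of_eq rfl
  | cons a l => exact h a (by simp)

/-- prefix sums of the tail are at most prefix sums of the list -/
lemma take_tail_le : ∀ (k : ℕ) (L : List ℝ), L.Pairwise (· ≥ ·) → (∀ x ∈ L, 0 ≤ x) →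
    (L.tail.take k).sum ≤ (L.take k).sum := by
  intro k
  induction k with
  | zero => intro L _ _; simp
  | succ k ih =>
    intro L hs hn
    cases L with
    | nil => simp
    | cons x l =>
      cases l with
      | nil => simpa using hn x (by simp)
      | cons y t =>
        have h1 : (t.take k).sum ≤ ((y :: t).take k).sum := by
          refine ih (y :: t) (hs.tail) ?_
          intro z hz; exact hn z (List.mem_cons_of_mem x hz)
        have hxy : y ≤ x := List.rel_of_pairwise_cons hs (a' := y) (by simp)
        simp only [List.tail_cons, List.take_succ_cons, List.sum_cons]
        linarith

lemma take_peel {L : List ℝ} {n : ℕ} (hn : 1 ≤ n) :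
    (L.take n).sum = L.headI + (L.tail.take (n - 1)).sum := by
  cases L with
  | nil => simp; rfl
  | cons a l =>
    obtain ⟨n, rfl⟩ := Nat.exists_eq_add_of_le hn
    simp [Nat.add_comm 1 n]

/-- exchange bound: removing one slot and paying the head -/
lemma take_exchange {L : List ℝ} (hs : L.Pairwise (· ≥ ·)) (hn : ∀ x ∈ L, 0 ≤ x) (n : ℕ) :
    (L.take n).sum ≤ L.headI + (L.take (n - 1)).sum := by
  rcases Nat.eq_zero_or_pos n with rfl | hpos
  · have h1 : (0:ℝ) ≤ L.headI := headI_nonneg hn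
    have h2 : (0:ℝ) ≤ (L.take (0 - 1)).sum :=
      List.sum_nonneg fun x hx => hn x (List.mem_of_mem_take hx)
    simpa using by linarith
  · rw [take_peel hpos]
    have := take_tail_le (n - 1) L hs hn
    linarith

lemma tail_nonneg {L : List ℝ} (hn : ∀ x ∈ L, 0 ≤ x) : ∀ x ∈ L.tail, 0 ≤ x :=
  fun x hx => hn x (List.mem_of_mem_tail hx)

/-- Key lemma: prefix-sum assignments are dominated by greedy. -/
lemma key {R : ℕ} : ∀ (m : ℕ) (L0 : List ℝ) (Ls : Fin R → List ℝ),
    L0.Pairwise (· ≥ ·) → (∀ i, (Ls i).Pairwise (· ≥ ·)) →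
    (∀ x ∈ L0, 0 ≤ x) → (∀ i, ∀ x ∈ Ls i, 0 ≤ x) →
    ∀ (a : ℕ) (b : Fin R → ℕ), a ≤ m → (∀ i, a + b i ≤ m) →
    (L0.take a).sum + ∑ i : Fin R, ((Ls i).take (b i)).sum ≤ greedyRounds m L0 Ls := by
  intro m
  induction m with
  | zero =>
    intro L0 Ls _ _ _ _ a b ha hb
    interval_cases a
    have : ∀ i, b i = 0 := fun i => by have := hb i; omega
    simp [greedyRounds, this]
  | succ m ih =>
    intro L0 Ls h0s hs h0n hn a b ha hb
    rw [greedyRounds]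
    by_cases hc : (∑ i : Fin R, (Ls i).headI) ≤ L0.headI
    · rw [if_pos hc]
      rcases Nat.eq_zero_or_pos a with rfl | hapos
      · -- a = 0 : exchange a head from every Ls i
        have hterm : ∀ i : Fin R, ((Ls i).take (b i)).sum ≤
            (Ls i).headI + ((Ls i).take (b i - 1)).sum :=
          fun i => take_exchange (hs i) (hn i) (b i)
        have hsum : ∑ i : Fin R, ((Ls i).take (b i)).sum ≤
            (∑ i : Fin R, (Ls i).headI) + ∑ i : Fin R, ((Ls i).take (b i - 1)).sum := by
          rw [← Finset.sum_add_distrib]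
          exact Finset.sum_le_sum fun i _ => hterm i
        have hih := ih L0.tail Ls h0s.tail hs (tail_nonneg h0n) hn 0 (fun i => b i - 1)
          (Nat.zero_le m) (fun i => by have := hb i; show 0 + (b i - 1) ≤ m; omega)
        simp only [List.take_zero, List.sum_nil, zero_add] at hih ⊢
        calc ∑ i : Fin R, ((Ls i).take (b i)).sum
            ≤ (∑ i : Fin R, (Ls i).headI) + ∑ i : Fin R, ((Ls i).take (b i - 1)).sum := hsum
          _ ≤ L0.headI + greedyRounds m L0.tail Ls := by linarith
      · -- a ≥ 1 : greedy's head pays for our top element of L0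
        rw [take_peel hapos]
        have hih := ih L0.tail Ls h0s.tail hs (tail_nonneg h0n) hn (a - 1) b
          (by omega) (fun i => by have := hb i; omega)
        linarith
    · rw [if_neg hc]
      push_neg at hc
      by_cases ham : a ≤ m
      · -- exchange a head from every Ls i
        have hterm : ∀ i : Fin R, ((Ls i).take (b i)).sum ≤
            (Ls i).headI + ((Ls i).tail.take (b i - 1)).sum := by
          intro i
          rcases Nat.eq_zero_or_pos (b i) with h0 | hpos
          · simp only [h0, List.take_zero, List.sum_nil]
            have : (0:ℝ) ≤ ((Ls i).tail.take (0 - 1)).sum :=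
              List.sum_nonneg (fun x hx =>
                tail_nonneg (hn i) x (List.mem_of_mem_take hx))
            have := headI_nonneg (hn i)
            linarith
          · exact le_of_eq (take_peel hpos)
        have hsum : ∑ i : Fin R, ((Ls i).take (b i)).sum ≤
            (∑ i : Fin R, (Ls i).headI) + ∑ i : Fin R, (((Ls i).tail).take (b i - 1)).sum := by
          rw [← Finset.sum_add_distrib]
          exact Finset.sum_le_sum fun i _ => hterm i
        have hih := ih L0 (fun i => (Ls i).tail) h0s (fun i => (hs i).tail) h0n
          (fun i => tail_nonneg (hn i)) a (fun i => b i - 1) ham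
          (fun i => by have := hb i; show a + (b i - 1) ≤ m; omega)
        linarith
      · -- a = m + 1 : exchange the top element of L0 for the heads
        have ha1 : a = m + 1 := by omega
        have hb0 : ∀ i, b i = 0 := fun i => by have := hb i; omega
        have hx := take_exchange h0s h0n a
        have hih := ih L0 (fun i => (Ls i).tail) h0s (fun i => (hs i).tail) h0n
          (fun i => tail_nonneg (hn i)) (a - 1) (fun _ => 0) (by omega) (fun i => by show a - 1 + 0 ≤ m; omega)
        simp only [List.take_zero, List.sum_nil, Finset.sum_const_zero, add_zero] at hih
        have : ∑ i : Fin R, ((Ls i).take (b i)).sum = 0 := by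
          simp [hb0]
        rw [this, add_zero]
        linarith

lemma getD_antitone {L : List ℝ} (hs : L.Pairwise (· ≥ ·)) (hn : ∀ x ∈ L, 0 ≤ x)
    {j1 j2 : ℕ} (h : j1 ≤ j2) : L.getD j2 0 ≤ L.getD j1 0 := by
  by_cases h2 : j2 < L.length
  · have h1 : j1 < L.length := lt_of_le_of_lt h h2
    rw [List.getD_eq_getElem L 0 h1, List.getD_eq_getElem L 0 h2]
    rcases eq_or_lt_of_le h with rfl | hlt
    · exact le_refl _
    · exact (List.pairwise_iff_getElem.mp hs) j1 j2 h1 h2 hlt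
  · rw [List.getD_eq_default L 0 (le_of_not_gt h2)]
    by_cases h1 : j1 < L.length
    · rw [List.getD_eq_getElem L 0 h1]
      exact hn _ (List.getElem_mem h1)
    · rw [List.getD_eq_default L 0 (le_of_not_gt h1)]

lemma takeSum_eq : ∀ (L : List ℝ) (k : ℕ),
    (L.take k).sum = ∑ j ∈ Finset.range k, L.getD j 0 := by
  intro L
  induction L with
  | nil => intro k; simp
  | cons a l ih =>
    intro k
    cases k with
    | zero => simp
    | succ k =>
      rw [Finset.sum_range_succ']
      simp only [List.take_succ_cons, List.sum_cons, List.getD_cons_succ, List.getD_cons_zero]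
      rw [ih k, add_comm]

lemma fin_strictMono_le {k : ℕ} {f : Fin k → ℕ} (hf : StrictMono f) (i : Fin k) :
    (i : ℕ) ≤ f i := by
  obtain ⟨n, hnk⟩ := i
  induction n with
  | zero => exact Nat.zero_le _
  | succ j ihj =>
    have hj : j < k := Nat.lt_of_succ_lt hnk
    have h1 : j ≤ f ⟨j, hj⟩ := ihj hj
    have h2 : f ⟨j, hj⟩ < f ⟨j + 1, hnk⟩ := hf (by simp)
    show j + 1 ≤ f ⟨j + 1, hnk⟩
    omega

lemma subset_sum_le_prefix {L : List ℝ} (hs : L.Pairwise (· ≥ ·)) (hn : ∀ x ∈ L, 0 ≤ x)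
    (S : Finset ℕ) : ∑ j ∈ S, L.getD j 0 ≤ (L.take S.card).sum := by
  set e := S.orderEmbOfFin rfl with he
  have hsum : ∑ j ∈ S, L.getD j 0 = ∑ i : Fin S.card, L.getD (e i) 0 := by
    refine (Finset.sum_bij (fun i _ => e i) ?_ ?_ ?_ ?_).symm
    · intro i _; exact S.orderEmbOfFin_mem rfl i
    · intro i _ j _ hij; exact e.injective hij
    · intro j hj
      have : j ∈ Set.range e := by rw [he, Finset.range_orderEmbOfFin]; exact hj
      obtain ⟨i, hi⟩ := this
      exact ⟨i, Finset.mem_univ i, hi⟩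
    · intro i _; rfl
  rw [hsum, takeSum_eq, ← Fin.sum_univ_eq_sum_range]
  refine Finset.sum_le_sum fun i _ => ?_
  exact getD_antitone hs hn (fin_strictMono_le e.strictMono i)

/-- Exchange-greedy Algorithm E is optimal when all resource counts equal `m`:
its total reward is at least that of any feasible assignment, i.e. any choice
of `S_0 ⊆ D_0` and `S_i ⊆ D_i` with `|S_0| + |S_i| ≤ m` for every `i`. -/
theorem greedy_rounds_optimal {R : ℕ} (hR : 0 < R) (m : ℕ)
    (L0 : List ℝ) (Ls : Fin R → List ℝ)
    (h0sorted : L0.Pairwise (· ≥ ·)) (hsorted : ∀ i, (Ls i).Pairwise (· ≥ ·))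
    (h0pos : ∀ x ∈ L0, 0 ≤ x) (hpos : ∀ i, ∀ x ∈ Ls i, 0 ≤ x)
    (S0 : Finset ℕ) (Si : Fin R → Finset ℕ)
    (hS0 : ∀ j ∈ S0, j < L0.length)
    (hSi : ∀ i, ∀ j ∈ Si i, j < (Ls i).length)
    (hcard : ∀ i, S0.card + (Si i).card ≤ m) :
    (∑ j ∈ S0, L0.getD j 0) + (∑ i : Fin R, ∑ j ∈ Si i, (Ls i).getD j 0) ≤
      greedyRounds m L0 Ls := by
  have h1 : ∑ j ∈ S0, L0.getD j 0 ≤ (L0.take S0.card).sum :=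
    subset_sum_le_prefix h0sorted h0pos S0
  have h2 : ∑ i : Fin R, ∑ j ∈ Si i, (Ls i).getD j 0 ≤
      ∑ i : Fin R, ((Ls i).take (Si i).card).sum :=
    Finset.sum_le_sum fun i _ => subset_sum_le_prefix (hsorted i) (hpos i) (Si i)
  have hkey := key m L0 Ls h0sorted hsorted h0pos hpos S0.card (fun i => (Si i).card)
    (le_trans (Nat.le_add_right _ _) (hcard ⟨0, hR⟩)) hcard
  linarith
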